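/- Let 0 < d < s, let X and Y be independent random variables each uniformly distributed on [0,s], let r ∈ (0,1) and α ∈ [1/2, 1), and assume s·√(2r(1−r)(1−α)) ≤ (1−r)s and s·√(2r(1−r)(1−α)) ≤ rs. Then P(X + Y − 2d ≤ −(2d − s·√(2(1−α)))) = 1 − α, i.e. VaR_α(X + Y − 2d) = 2d − s·√(2(1−α)); and with r₁ = r₂ = r, so that R(r₁) + R(r₂) = X + Y − 2d, one has VaR_α(R(r₁) + R(r₂)) ≤ VaR_α(R(r₁)) + VaR_α(R(r₂)), i.e. 2d − s·√(2(1−α)) ≤ 2·(d − s·√(2r(1−r)(1−α))). (Theorem 3.5.) -/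

import Mathlib

open MeasureTheory ProbabilityTheory Set

/-- The uniform probability distribution on the interval `[0, s]`. -/
noncomputable def uniformOnIcc (s : ℝ) : Measure ℝ :=
  (ENNReal.ofReal s)⁻¹ • (volume.restrict (Icc (0 : ℝ) s))

instance uniformOnIcc_sfinite (s : ℝ) : SFinite (uniformOnIcc s) := by
  unfold uniformOnIcc; infer_instance

lemma triangle_lintegral (s t : ℝ) (hs : 0 < s) (ht0 : 0 ≤ t) (hts : t ≤ s) :
    ∫⁻ x in Icc (0:ℝ) s, ENNReal.ofReal (t - x) = ENNReal.ofReal (t ^ 2 / 2) := by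
  rw [← Set.Icc_union_Ioc_eq_Icc ht0 hts,
    lintegral_union measurableSet_Ioc
      ((Set.Iic_disjoint_Ioc le_rfl).mono_left Set.Icc_subset_Iic_self)]
  have h2 : ∫⁻ x in Ioc t s, ENNReal.ofReal (t - x) = 0 := by
    rw [setLIntegral_congr_fun measurableSet_Ioc
      (fun x hx => by
        show ENNReal.ofReal (t - x) = 0
        exact ENNReal.ofReal_eq_zero.mpr (by linarith [hx.1]))]
    simp
  rw [h2, add_zero]
  have hInt : IntegrableOn (fun x : ℝ => t - x) (Icc 0 t) volume :=
    (continuous_const.sub continuous_id).integrableOn_Icc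
  rw [← ofReal_integral_eq_lintegral_ofReal hInt
    ((ae_restrict_iff' measurableSet_Icc).2 (ae_of_all _ fun x hx => by
      simp only [Pi.zero_apply]; linarith [hx.2]))]
  congr 1
  rw [MeasureTheory.integral_Icc_eq_integral_Ioc,
    ← intervalIntegral.integral_of_le ht0]
  have : ∫ x in (0:ℝ)..t, (t - x) = t * t - t ^ 2 / 2 := by
    rw [intervalIntegral.integral_sub intervalIntegrable_const
      intervalIntegral.intervalIntegrable_id]
    simp [integral_id]
  rw [this]; ring

lemma triangle_prob (s t : ℝ) (hs : 0 < s) (ht0 : 0 ≤ t) (hts : t ≤ s) :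
    ((uniformOnIcc s).prod (uniformOnIcc s)) {p : ℝ × ℝ | p.1 + p.2 ≤ t}
      = ENNReal.ofReal (t ^ 2 / (2 * s ^ 2)) := by
  have hmeas : MeasurableSet {p : ℝ × ℝ | p.1 + p.2 ≤ t} :=
    measurableSet_le (measurable_fst.add measurable_snd) measurable_const
  rw [Measure.prod_apply hmeas]
  have hslice : ∀ x : ℝ, (uniformOnIcc s) (Prod.mk x ⁻¹' {p : ℝ × ℝ | p.1 + p.2 ≤ t})
      = (ENNReal.ofReal s)⁻¹ * ENNReal.ofReal (min s (t - x)) := by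
    intro x
    have h1 : Prod.mk x ⁻¹' {p : ℝ × ℝ | p.1 + p.2 ≤ t} = Iic (t - x) := by
      ext y
      simp only [Set.mem_preimage, Set.mem_setOf_eq, Set.mem_Iic]
      constructor <;> intro h <;> linarith
    have h2 : Icc (0:ℝ) s ∩ Iic (t - x) = Icc 0 (min s (t - x)) := by
      ext y
      simp only [Set.mem_inter_iff, Set.mem_Icc, Set.mem_Iic, le_min_iff]
      tauto
    rw [h1, uniformOnIcc, Measure.smul_apply, smul_eq_mul,
      Measure.restrict_apply measurableSet_Iic, Set.inter_comm, h2, Real.volume_Icc,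
      sub_zero]
  simp_rw [hslice]
  rw [uniformOnIcc, lintegral_smul_measure, lintegral_const_mul _
    (Measurable.ennreal_ofReal (by fun_prop))]
  rw [setLIntegral_congr_fun measurableSet_Icc (fun x hx => by
    show ENNReal.ofReal (min s (t - x)) = ENNReal.ofReal (t - x)
    rw [min_eq_right (by linarith [hx.1])])]
  rw [triangle_lintegral s t hs ht0 hts,
    ← ENNReal.ofReal_inv_of_pos hs,
    ← ENNReal.ofReal_mul (by positivity), smul_eq_mul,
    ← ENNReal.ofReal_mul (by positivity)]
  congr 1
  have hsne : s ≠ 0 := hs.ne'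
  field_simp

/-- Theorem 3.5: for `α ∈ [1/2, 1)` and `r ∈ (0,1)` with
`s·√(2r(1-r)(1-α)) ≤ (1-r)s` and `s·√(2r(1-r)(1-α)) ≤ rs`, the aggregate position
`X + Y - 2d` satisfies `P(X + Y - 2d ≤ -(2d - s·√(2(1-α)))) = 1 - α`, i.e.
`VaR_α(X + Y - 2d) = 2d - s·√(2(1-α))`; moreover with `r₁ = r₂ = r` one has
`VaR_α(R(r₁) + R(r₂)) ≤ VaR_α(R(r₁)) + VaR_α(R(r₂))`, i.e.
`2d - s·√(2(1-α)) ≤ 2(d - s·√(2r(1-r)(1-α)))`. -/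
theorem var_subadditive_for_system
    {Ω : Type*} [MeasurableSpace Ω] (P : Measure Ω) [IsProbabilityMeasure P]
    (s d : ℝ) (hd : 0 < d) (hds : d < s)
    (X Y : Ω → ℝ) (hXm : Measurable X) (hYm : Measurable Y)
    (hX : P.map X = uniformOnIcc s) (hY : P.map Y = uniformOnIcc s)
    (hXY : IndepFun X Y P)
    (r : ℝ) (hr : r ∈ Ioo (0 : ℝ) 1) (α : ℝ) (hα : α ∈ Ico (1 / 2 : ℝ) 1)
    (hK1 : s * Real.sqrt (2 * r * (1 - r) * (1 - α)) ≤ (1 - r) * s)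
    (hK2 : s * Real.sqrt (2 * r * (1 - r) * (1 - α)) ≤ r * s) :
    P {ω | X ω + Y ω - 2 * d ≤ -(2 * d - s * Real.sqrt (2 * (1 - α)))}
        = ENNReal.ofReal (1 - α) ∧
    2 * d - s * Real.sqrt (2 * (1 - α))
        ≤ 2 * (d - s * Real.sqrt (2 * r * (1 - r) * (1 - α))) := by
  have hs : 0 < s := hd.trans hds
  have hα1 : α < 1 := hα.2
  have hα2 : (1:ℝ)/2 ≤ α := hα.1
  have hu : (0:ℝ) ≤ 2 * (1 - α) := by linarith
  set t : ℝ := s * Real.sqrt (2 * (1 - α)) with ht_def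
  have ht0 : 0 ≤ t := mul_nonneg hs.le (Real.sqrt_nonneg _)
  have hts : t ≤ s := by
    have h1 : Real.sqrt (2 * (1 - α)) ≤ 1 := Real.sqrt_le_one.mpr (by linarith)
    calc t ≤ s * 1 := mul_le_mul_of_nonneg_left h1 hs.le
    _ = s := mul_one s
  constructor
  · have hset : {ω | X ω + Y ω - 2 * d ≤ -(2 * d - s * Real.sqrt (2 * (1 - α)))}
        = (fun ω => (X ω, Y ω)) ⁻¹' {p : ℝ × ℝ | p.1 + p.2 ≤ t} := by
      ext ω
      simp only [Set.mem_setOf_eq, Set.mem_preimage, ht_def]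
      constructor <;> intro h <;> linarith
    have hmeas : MeasurableSet {p : ℝ × ℝ | p.1 + p.2 ≤ t} :=
      measurableSet_le (measurable_fst.add measurable_snd) measurable_const
    have hmap : P.map (fun ω => (X ω, Y ω)) = (P.map X).prod (P.map Y) :=
      (indepFun_iff_map_prod_eq_prod_map_map hXm.aemeasurable hYm.aemeasurable).mp hXY
    rw [hset, ← Measure.map_apply (hXm.prodMk hYm) hmeas, hmap, hX, hY,
      triangle_prob s t hs ht0 hts]
    congr 1
    rw [ht_def, mul_pow, Real.sq_sqrt hu]
    field_simp
  · set v : ℝ := 2 * r * (1 - r) * (1 - α) with hv_def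
    have hv0 : 0 ≤ v := by
      have h1 := hr.1; have h2 := hr.2
      exact mul_nonneg (mul_nonneg (by linarith) (by linarith)) (by linarith)
    have key : 2 * Real.sqrt v ≤ Real.sqrt (2 * (1 - α)) := by
      have h42 : Real.sqrt 4 = 2 := by
        rw [show (4:ℝ) = 2^2 by norm_num, Real.sqrt_sq (by norm_num : (0:ℝ) ≤ 2)]
      have h4 : 2 * Real.sqrt v = Real.sqrt (4 * v) := by
        rw [Real.sqrt_mul (by norm_num : (0:ℝ) ≤ 4), h42]
      rw [h4]
      apply Real.sqrt_le_sqrt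
      have h1 := hr.1; have h2 := hr.2
      nlinarith [sq_nonneg (2 * r - 1), hα.2]
    nlinarith [mul_le_mul_of_nonneg_left key hs.le]
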